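/- Let v_0 > 0, c₁ > 0, 0 < c₂ < √v_0, c₃ > 0 and σ = 1. Define F(v) = (1/c₃)·∫_{v_0}^{v} (u − c₂√u)/(u(u + c₁√u)) du. Then for all v ≥ v_0, F(v) ≥ [√v_0/((√v_0 + c₁)c₃)]·[ln v − ln v_0 + 2c₂ v^{−1/2} − 2c₂ v_0^{−1/2}], and consequently F(v) ≥ F₁(v) := [√v_0/((√v_0 + c₁)c₃)]·[ln v − ln v_0 − 2c₂ v_0^{−1/2}]. -/

import Mathlib

theorem stmt_15 (v₀ c₁ c₂ c₃ : ℝ)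
    (hv₀ : 0 < v₀) (hc₁ : 0 < c₁) (hc₂ : 0 < c₂) (hc₂v : c₂ < Real.sqrt v₀)
    (hc₃ : 0 < c₃)
    (F F₁ : ℝ → ℝ)
    (hF : ∀ v, F v = (1 / c₃) * ∫ u in v₀..v,
      (u - c₂ * Real.sqrt u) / (u * (u + c₁ * Real.sqrt u)))
    (hF₁ : ∀ v, F₁ v = (Real.sqrt v₀ / ((Real.sqrt v₀ + c₁) * c₃)) *
      (Real.log v - Real.log v₀ - 2 * c₂ / Real.sqrt v₀)) :
    ∀ v ≥ v₀,
      (Real.sqrt v₀ / ((Real.sqrt v₀ + c₁) * c₃)) *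
        (Real.log v - Real.log v₀ + 2 * c₂ / Real.sqrt v - 2 * c₂ / Real.sqrt v₀)
        ≤ F v ∧ F₁ v ≤ F v := by
  intro v hv
  have hvpos : 0 < v := lt_of_lt_of_le hv₀ hv
  set s₀ := Real.sqrt v₀ with hs₀
  have hs₀pos : 0 < s₀ := Real.sqrt_pos.mpr hv₀
  have hden : 0 < s₀ + c₁ := by positivity
  set K := s₀ / (s₀ + c₁) with hK
  have hKpos : 0 < K := by positivity
  set g : ℝ → ℝ := fun u => K * (1 / u - c₂ / (u * Real.sqrt u)) with hg
  set f : ℝ → ℝ := fun u => (u - c₂ * Real.sqrt u) / (u * (u + c₁ * Real.sqrt u)) with hf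
  -- continuity
  have hgc : ContinuousOn g (Set.Icc v₀ v) := by
    apply ContinuousOn.mul continuousOn_const
    apply ContinuousOn.sub
    · exact ContinuousOn.div continuousOn_const continuousOn_id
        (fun x hx => ne_of_gt (lt_of_lt_of_le hv₀ hx.1))
    · apply ContinuousOn.div continuousOn_const
        (continuousOn_id.mul Real.continuous_sqrt.continuousOn)
      intro x hx
      have hx0 : 0 < x := lt_of_lt_of_le hv₀ hx.1
      have : 0 < Real.sqrt x := Real.sqrt_pos.mpr hx0
      exact mul_ne_zero (ne_of_gt hx0) (ne_of_gt this)
  have hfc : ContinuousOn f (Set.Icc v₀ v) := by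
    apply ContinuousOn.div
    · exact continuousOn_id.sub (continuousOn_const.mul Real.continuous_sqrt.continuousOn)
    · exact continuousOn_id.mul
        (continuousOn_id.add (continuousOn_const.mul Real.continuous_sqrt.continuousOn))
    · intro x hx
      have hx0 : 0 < x := lt_of_lt_of_le hv₀ hx.1
      have hs : 0 ≤ Real.sqrt x := Real.sqrt_nonneg x
      positivity
  have huIcc : Set.uIcc v₀ v = Set.Icc v₀ v := Set.uIcc_of_le hv
  have hgint : IntervalIntegrable g MeasureTheory.volume v₀ v :=
    (huIcc ▸ hgc).intervalIntegrable
  have hfint : IntervalIntegrable f MeasureTheory.volume v₀ v :=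
    (huIcc ▸ hfc).intervalIntegrable
  -- pointwise bound
  have hle : ∀ u ∈ Set.Icc v₀ v, g u ≤ f u := by
    intro u hu
    have hu0 : 0 < u := lt_of_lt_of_le hv₀ hu.1
    set s := Real.sqrt u with hs
    have hspos : 0 < s := Real.sqrt_pos.mpr hu0
    have hsq : s ^ 2 = u := Real.sq_sqrt hu0.le
    have hss₀ : s₀ ≤ s := Real.sqrt_le_sqrt hu.1
    have hsc₂ : c₂ ≤ s := le_of_lt (lt_of_lt_of_le hc₂v hss₀)
    have h1 : g u = K * (s - c₂) / (u * s) := by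
      simp only [hg]
      field_simp
      rw [← hs]
      ring
    have h2 : f u = (s - c₂) / (u * (s + c₁)) := by
      simp only [hf, ← hsq]
      have hs0 : s ≠ 0 := ne_of_gt hspos
      field_simp
      rw [Real.sqrt_sq hspos.le]
      ring
    rw [h1, h2]
    have hKs : K * (s + c₁) ≤ s := by
      rw [hK, div_mul_eq_mul_div, div_le_iff₀ hden]
      nlinarith
    rw [div_le_div_iff₀ (by positivity) (by positivity)]
    nlinarith [mul_nonneg (mul_nonneg (sub_nonneg.mpr hsc₂) hu0.le)
      (sub_nonneg.mpr hKs)]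
  -- FTC for g
  have hderiv : ∀ u ∈ Set.uIcc v₀ v,
      HasDerivAt (fun u => K * (Real.log u + 2 * c₂ / Real.sqrt u)) (g u) u := by
    intro u hu
    rw [huIcc] at hu
    have hu0 : 0 < u := lt_of_lt_of_le hv₀ hu.1
    have hspos : 0 < Real.sqrt u := Real.sqrt_pos.mpr hu0
    have hlog : HasDerivAt Real.log (1 / u) u := by
      simpa [one_div] using Real.hasDerivAt_log (ne_of_gt hu0)
    have h2 : HasDerivAt Real.sqrt (1 / (2 * Real.sqrt u)) u :=
      Real.hasDerivAt_sqrt (ne_of_gt hu0)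
    have h3 : HasDerivAt (fun u => (Real.sqrt u)⁻¹)
        (-(1 / (2 * Real.sqrt u)) / (Real.sqrt u) ^ 2) u := h2.inv (ne_of_gt hspos)
    have h4 : HasDerivAt (fun u => 2 * c₂ / Real.sqrt u)
        (2 * c₂ * (-(1 / (2 * Real.sqrt u)) / (Real.sqrt u) ^ 2)) u := by
      simpa [div_eq_mul_inv] using h3.const_mul (2 * c₂)
    have h5 := ((hlog.add h4).const_mul K)
    refine h5.congr_deriv ?_
    have hsq : (Real.sqrt u) ^ 2 = u := Real.sq_sqrt hu0.le
    rw [hsq]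
    simp only [hg]
    field_simp
    ring
  have hFTC : ∫ u in v₀..v, g u =
      K * (Real.log v + 2 * c₂ / Real.sqrt v) - K * (Real.log v₀ + 2 * c₂ / s₀) :=
    intervalIntegral.integral_eq_sub_of_hasDerivAt hderiv hgint
  have hmono : ∫ u in v₀..v, g u ≤ ∫ u in v₀..v, f u :=
    intervalIntegral.integral_mono_on hv hgint hfint hle
  have key : K * (Real.log v - Real.log v₀ + 2 * c₂ / Real.sqrt v - 2 * c₂ / s₀)
      ≤ ∫ u in v₀..v, f u := by
    calc K * (Real.log v - Real.log v₀ + 2 * c₂ / Real.sqrt v - 2 * c₂ / s₀)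
        = ∫ u in v₀..v, g u := by rw [hFTC]; ring
      _ ≤ _ := hmono
  have hc₃' : (0:ℝ) < 1 / c₃ := by positivity
  have main : (s₀ / ((s₀ + c₁) * c₃)) *
      (Real.log v - Real.log v₀ + 2 * c₂ / Real.sqrt v - 2 * c₂ / s₀) ≤ F v := by
    rw [hF v]
    have heq : s₀ / ((s₀ + c₁) * c₃) = (1 / c₃) * K := by
      rw [hK]; field_simp
    rw [heq, mul_assoc]
    exact mul_le_mul_of_nonneg_left key hc₃'.le
  refine ⟨main, ?_⟩
  refine le_trans ?_ main
  rw [hF₁ v]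
  have hsv : 0 < Real.sqrt v := Real.sqrt_pos.mpr hvpos
  have hcoeff : 0 ≤ s₀ / ((s₀ + c₁) * c₃) := by positivity
  apply mul_le_mul_of_nonneg_left _ hcoeff
  have : 0 ≤ 2 * c₂ / Real.sqrt v := by positivity
  linarith
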